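/- A random variable X : Ω → {0,...,m} (m ≥ 1, q ∈ (0,1)) has the binomial distribution Bin(m,q) if and only if its pmf ρ satisfies, for all k = 0,...,m: ρ(k) = Σ_{ℓ=k}^{m-1}(1 - (q/(1-q))·(m-ℓ)/(ℓ+1))·P(X = ℓ) + P(X = m). -/

import Mathlib

theorem stmt_17 (m : ℕ) (hm : 1 ≤ m) (q : ℝ) (hq0 : 0 < q) (hq1 : q < 1)
    (ρ : ℕ → ℝ) (hρnonneg : ∀ k, 0 ≤ ρ k)
    (hρsum : ∑ k ∈ Finset.range (m + 1), ρ k = 1)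
    (hρsupp : ∀ k : ℕ, m < k → ρ k = 0) :
    (∀ k ≤ m, ρ k = (Nat.choose m k : ℝ) * q ^ k * (1 - q) ^ (m - k)) ↔
    (∀ k ≤ m, ρ k = ∑ ℓ ∈ Finset.Ico k m,
      (1 - q / (1 - q) * ((m : ℝ) - (ℓ : ℝ)) / ((ℓ : ℝ) + 1)) * ρ ℓ + ρ m) := by
  have h1q : (0:ℝ) < 1 - q := by linarith
  set b : ℕ → ℝ := fun k => (Nat.choose m k : ℝ) * q ^ k * (1 - q) ^ (m - k) with hb
  -- binomial recursion
  have brec : ∀ k < m, b (k+1) = q/(1-q) * ((m:ℝ)-(k:ℝ))/((k:ℝ)+1) * b k := by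
    intro k hk
    have hk1 : ((k:ℝ)+1) ≠ 0 := by positivity
    have hc : ((m.choose (k+1) : ℝ)) * ((k:ℝ)+1) = (m.choose k : ℝ) * ((m:ℝ) - k) := by
      have h2 : ((m.choose (k+1) * (k+1) : ℕ) : ℝ) = ((m.choose k * (m - k) : ℕ) : ℝ) := by
        exact_mod_cast congrArg (Nat.cast (R := ℝ)) (Nat.choose_succ_right_eq m k)
      push_cast [Nat.cast_sub hk.le] at h2
      linarith [h2]
    have hmk : m - k = (m - (k+1)) + 1 := by omega
    have e1 : (1 - q) ^ (m - k) = (1 - q) ^ (m - (k+1)) * (1 - q) := by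
      rw [hmk, pow_succ]
    simp only [hb]
    rw [e1, pow_succ]
    field_simp
    linear_combination hc
  -- recursion → sum formula, for any f
  have rec_to_sum : ∀ f : ℕ → ℝ,
      (∀ k < m, f (k+1) = q/(1-q) * ((m:ℝ)-(k:ℝ))/((k:ℝ)+1) * f k) →
      ∀ k ≤ m, f k = ∑ ℓ ∈ Finset.Ico k m,
        (1 - q / (1 - q) * ((m : ℝ) - (ℓ : ℝ)) / ((ℓ : ℝ) + 1)) * f ℓ + f m := by
    intro f hf k hk
    have hcong : ∑ ℓ ∈ Finset.Ico k m,
        (1 - q / (1 - q) * ((m : ℝ) - (ℓ : ℝ)) / ((ℓ : ℝ) + 1)) * f ℓ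
        = ∑ ℓ ∈ Finset.Ico k m, (f ℓ - f (ℓ+1)) := by
      apply Finset.sum_congr rfl
      intro ℓ hℓ
      have hℓm : ℓ < m := (Finset.mem_Ico.mp hℓ).2
      rw [hf ℓ hℓm]; ring
    rw [hcong, Finset.sum_Ico_eq_sum_range]
    have htel := Finset.sum_range_sub' (fun i => f (k + i)) (m - k)
    simp only [← add_assoc, add_zero, Nat.add_sub_cancel' hk] at htel
    rw [htel]; ring
  constructor
  · intro hbin k hk
    have hfrec : ∀ j, j < m → ρ (j+1) = q/(1-q) * ((m:ℝ)-(j:ℝ))/((j:ℝ)+1) * ρ j := by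
      intro j hj
      rw [hbin j hj.le, hbin (j+1) hj, ← brec j hj]
    exact rec_to_sum ρ hfrec k hk
  · intro hsum
    have hrec : ∀ j, j < m → ρ (j+1) = q/(1-q) * ((m:ℝ)-(j:ℝ))/((j:ℝ)+1) * ρ j := by
      intro j hj
      have h1 := hsum j hj.le
      have h2 := hsum (j+1) hj
      rw [Finset.sum_eq_sum_Ico_succ_bot hj, add_assoc, ← h2] at h1
      linear_combination -h1
    have hb0 : b 0 = (1-q)^m := by simp [hb]
    have hb0pos : 0 < b 0 := by rw [hb0]; positivity
    have key : ∀ k, k ≤ m → ρ k = (ρ 0 / b 0) * b k := by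
      intro k hk
      induction k with
      | zero => field_simp
      | succ n ih =>
        have hn : n < m := hk
        rw [hrec n hn, ih hn.le, brec n hn]; ring
    have bsum : ∑ k ∈ Finset.range (m+1), b k = 1 := by
      have hab := add_pow q (1-q) m
      rw [show q + (1-q) = 1 by ring, one_pow] at hab
      simp only [hb]
      calc ∑ k ∈ Finset.range (m+1), (m.choose k : ℝ) * q ^ k * (1 - q) ^ (m - k)
          = ∑ k ∈ Finset.range (m+1), q ^ k * (1 - q) ^ (m - k) * (m.choose k : ℝ) :=
            Finset.sum_congr rfl (by intro k _; ring)
        _ = 1 := hab.symm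
    have hρ0 : ρ 0 = b 0 := by
      have hS : ∑ k ∈ Finset.range (m+1), ρ k = (ρ 0 / b 0) * ∑ k ∈ Finset.range (m+1), b k := by
        rw [Finset.mul_sum]
        apply Finset.sum_congr rfl
        intro k hk
        exact key k (Nat.lt_succ_iff.mp (Finset.mem_range.mp hk))
      rw [hρsum, bsum, mul_one] at hS
      field_simp [hb0pos.ne'] at hS
      linarith
    intro k hk
    rw [key k hk, hρ0, div_self hb0pos.ne', one_mul]
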